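/- If a sequence of random variables (Y_n) converges in probability to Y, where each Y_n is a finite convex combination of random variables all having the same distribution F with finite first moment, then for every continuous convex function φ (for which the relevant expectations exist), E[φ(Y)] ≤ E[φ(X)] for any X with distribution F. In other words, every element of the closure in probability of the convex hull of F-distributed random variables is dominated in convex order by F. -/

import Mathlib

open MeasureTheory ProbabilityTheory Filter Set Topology

/-- A convex function on ℝ has a global affine minorant through `(0, φ 0)`. -/
lemma my_exists_affine_le {φ : ℝ → ℝ} (hφ : ConvexOn ℝ univ φ) :
    ∃ a : ℝ, ∀ x, φ 0 + a * x ≤ φ x := by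
  set S : Set ℝ := (fun x => (φ 0 - φ x) / (0 - x)) '' Iio 0 with hS
  have hslope : ∀ x < 0, ∀ y > 0, (φ 0 - φ x) / (0 - x) ≤ (φ y - φ 0) / (y - 0) := by
    intro x hx y hy
    exact hφ.slope_mono_adjacent (mem_univ x) (mem_univ y) hx hy
  have hne : S.Nonempty := ⟨_, ⟨-1, by norm_num, rfl⟩⟩
  have hbdd : BddAbove S := by
    refine ⟨(φ 1 - φ 0) / (1 - 0), ?_⟩
    rintro s ⟨x, hx, rfl⟩
    exact hslope x hx 1 one_pos
  set a := sSup S with ha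
  refine ⟨a, fun x => ?_⟩
  rcases lt_trichotomy x 0 with hx | hx | hx
  · have h1 : (φ 0 - φ x) / (0 - x) ≤ a := le_csSup hbdd ⟨x, hx, rfl⟩
    have hpos : 0 < 0 - x := by linarith
    rw [div_le_iff₀ hpos] at h1
    nlinarith
  · subst hx; simp
  · have h1 : a ≤ (φ x - φ 0) / (x - 0) := by
      apply csSup_le hne
      rintro s ⟨z, hz, rfl⟩
      exact hslope z hz x hx
    have hpos : 0 < x - 0 := by linarith
    rw [le_div_iff₀ hpos] at h1
    nlinarith

lemma my_fatou_aux {Ω : Type*} [MeasurableSpace Ω] {P : Measure Ω} [IsProbabilityMeasure P]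
    {W : ℕ → Ω → ℝ} {V : Ω → ℝ} {C : ℝ}
    (hW : ∀ i, AEMeasurable (W i) P) (hWnn : ∀ i, 0 ≤ᵐ[P] W i)
    (hWint : ∀ i, Integrable (W i) P) (hWC : ∀ i, ∫ ω, W i ω ∂P ≤ C)
    (hae : ∀ᵐ ω ∂P, Tendsto (fun i => W i ω) atTop (𝓝 (V ω))) :
    ∫⁻ ω, ENNReal.ofReal (V ω) ∂P ≤ ENNReal.ofReal C := by
  have h1 : ∫⁻ ω, ENNReal.ofReal (V ω) ∂P
      ≤ liminf (fun i => ∫⁻ ω, ENNReal.ofReal (W i ω) ∂P) atTop := by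
    have := lintegral_liminf_le' (μ := P) (u := atTop)
      (f := fun i ω => ENNReal.ofReal (W i ω))
      (fun i => ENNReal.measurable_ofReal.comp_aemeasurable (hW i))
    refine le_trans (le_of_eq ?_) this
    refine lintegral_congr_ae ?_
    filter_upwards [hae] with ω hω
    exact ((ENNReal.continuous_ofReal.tendsto _).comp hω).liminf_eq.symm
  refine h1.trans ?_
  have h2 : ∀ i, ∫⁻ ω, ENNReal.ofReal (W i ω) ∂P ≤ ENNReal.ofReal C := by
    intro i
    rw [← ofReal_integral_eq_lintegral_ofReal (hWint i) (hWnn i)]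
    exact ENNReal.ofReal_le_ofReal (hWC i)
  calc liminf (fun i => ∫⁻ ω, ENNReal.ofReal (W i ω) ∂P) atTop
      ≤ liminf (fun _ : ℕ => ENNReal.ofReal C) atTop :=
        liminf_le_liminf (Eventually.of_forall h2)
    _ = ENNReal.ofReal C := liminf_const _

lemma my_of_lintegral_bound {Ω : Type*} [MeasurableSpace Ω] {P : Measure Ω}
    [IsProbabilityMeasure P] {V : Ω → ℝ} {C : ℝ}
    (hV : AEMeasurable V P) (hVnn : 0 ≤ᵐ[P] V)
    (h : ∫⁻ ω, ENNReal.ofReal (V ω) ∂P ≤ ENNReal.ofReal C) (hC : 0 ≤ C) :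
    Integrable V P ∧ ∫ ω, V ω ∂P ≤ C := by
  have hfin : HasFiniteIntegral V P := by
    rw [hasFiniteIntegral_iff_norm]
    have heq : ∫⁻ ω, ENNReal.ofReal ‖V ω‖ ∂P = ∫⁻ ω, ENNReal.ofReal (V ω) ∂P := by
      refine lintegral_congr_ae ?_
      filter_upwards [hVnn] with ω hω
      rw [Real.norm_of_nonneg hω]
    rw [heq]
    exact lt_of_le_of_lt h ENNReal.ofReal_lt_top
  have hint : Integrable V P := ⟨hV.aestronglyMeasurable, hfin⟩
  refine ⟨hint, ?_⟩
  rw [integral_eq_lintegral_of_nonneg_ae hVnn hV.aestronglyMeasurable]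
  calc (∫⁻ ω, ENNReal.ofReal (V ω) ∂P).toReal
      ≤ (ENNReal.ofReal C).toReal := ENNReal.toReal_mono ENNReal.ofReal_ne_top h
    _ = C := ENNReal.toReal_ofReal hC

lemma my_ident_ae_le {Ω : Type*} [MeasurableSpace Ω] {P : Measure Ω} {Z X : Ω → ℝ} {m : ℝ}
    (h : IdentDistrib Z X P P) (hm : ∀ᵐ ω ∂P, m ≤ X ω) : ∀ᵐ ω ∂P, m ≤ Z ω := by
  have h1 : ∀ᵐ y ∂(P.map X), y ∈ Ici m :=
    (mem_ae_map_iff h.aemeasurable_snd measurableSet_Ici).2 hm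
  rw [← h.map_eq] at h1
  exact (mem_ae_map_iff h.aemeasurable_fst measurableSet_Ici).1 h1

section comb
variable {Ω : Type*} [MeasurableSpace Ω] {P : Measure Ω} [IsProbabilityMeasure P]
  {X : Ω → ℝ} {k : ℕ} {lam : Fin k → ℝ} {Z : Fin k → Ω → ℝ}

lemma my_comb_mean (hXint : Integrable X P)
    (hsum : ∑ i, lam i = 1) (hZ : ∀ i, IdentDistrib (Z i) X P P) :
    Integrable (fun ω => ∑ i, lam i * Z i ω) P ∧
      ∫ ω, (∑ i, lam i * Z i ω) ∂P = ∫ ω, X ω ∂P := by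
  have hZi : ∀ i, Integrable (Z i) P := fun i => (hZ i).integrable_iff.2 hXint
  have hint : Integrable (fun ω => ∑ i, lam i * Z i ω) P :=
    integrable_finset_sum _ (fun i _ => (hZi i).const_mul _)
  refine ⟨hint, ?_⟩
  rw [integral_finset_sum _ (fun i _ => (hZi i).const_mul _)]
  have : ∀ i, ∫ ω, lam i * Z i ω ∂P = lam i * ∫ ω, X ω ∂P := by
    intro i
    rw [integral_const_mul, (hZ i).integral_eq]
  simp_rw [this, ← Finset.sum_mul, hsum, one_mul]

lemma my_comb_le {ψ : ℝ → ℝ} (hψc : Continuous ψ) (hψconv : ConvexOn ℝ univ ψ)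
    (hXint : Integrable X P) (hintX : Integrable (fun ω => ψ (X ω)) P)
    (hlam : ∀ i, 0 ≤ lam i) (hsum : ∑ i, lam i = 1)
    (hZ : ∀ i, IdentDistrib (Z i) X P P) :
    Integrable (fun ω => ψ (∑ i, lam i * Z i ω)) P ∧
      ∫ ω, ψ (∑ i, lam i * Z i ω) ∂P ≤ ∫ ω, ψ (X ω) ∂P := by
  have hZi : ∀ i, Integrable (Z i) P := fun i => (hZ i).integrable_iff.2 hXint
  have hψZ : ∀ i, IdentDistrib (fun ω => ψ (Z i ω)) (fun ω => ψ (X ω)) P P :=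
    fun i => (hZ i).comp hψc.measurable
  have hψZi : ∀ i, Integrable (fun ω => ψ (Z i ω)) P := fun i => (hψZ i).integrable_iff.2 hintX
  have hg : Integrable (fun ω => ∑ i, lam i * ψ (Z i ω)) P :=
    integrable_finset_sum _ (fun i _ => (hψZi i).const_mul _)
  have hcombInt : Integrable (fun ω => ∑ i, lam i * Z i ω) P :=
    integrable_finset_sum _ (fun i _ => (hZi i).const_mul _)
  -- Jensen pointwise
  have hJ : ∀ ω, ψ (∑ i, lam i * Z i ω) ≤ ∑ i, lam i * ψ (Z i ω) := by
    intro ω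
    have := hψconv.map_sum_le (t := Finset.univ) (w := lam) (p := fun i => Z i ω)
      (fun i _ => hlam i) hsum (fun i _ => mem_univ _)
    simpa [smul_eq_mul] using this
  -- affine minorant
  obtain ⟨a, ha⟩ := my_exists_affine_le hψconv
  have hlow : Integrable (fun ω => ψ 0 + a * (∑ i, lam i * Z i ω)) P :=
    (integrable_const _).add (hcombInt.const_mul _)
  have hmeas : AEStronglyMeasurable (fun ω => ψ (∑ i, lam i * Z i ω)) P :=
    (hψc.measurable.comp_aemeasurable hcombInt.aemeasurable).aestronglyMeasurable
  have hint : Integrable (fun ω => ψ (∑ i, lam i * Z i ω)) P := by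
    refine Integrable.mono' (g := fun ω => |∑ i, lam i * ψ (Z i ω)|
        + |ψ 0 + a * (∑ i, lam i * Z i ω)|) (hg.abs.add hlow.abs) hmeas ?_
    refine Eventually.of_forall (fun ω => ?_)
    rw [Real.norm_eq_abs, abs_le]
    constructor
    · have := ha (∑ i, lam i * Z i ω)
      have h2 := neg_abs_le (ψ 0 + a * (∑ i, lam i * Z i ω))
      have h3 := abs_nonneg (∑ i, lam i * ψ (Z i ω))
      linarith
    · have := hJ ω
      have h2 := le_abs_self (∑ i, lam i * ψ (Z i ω))
      have h3 := abs_nonneg (ψ 0 + a * (∑ i, lam i * Z i ω))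
      linarith
  refine ⟨hint, ?_⟩
  calc ∫ ω, ψ (∑ i, lam i * Z i ω) ∂P
      ≤ ∫ ω, (∑ i, lam i * ψ (Z i ω)) ∂P :=
        integral_mono hint hg hJ
    _ = ∑ i, lam i * ∫ ω, ψ (X ω) ∂P := by
        rw [integral_finset_sum _ (fun i _ => (hψZi i).const_mul _)]
        exact Finset.sum_congr rfl (fun i _ => by rw [integral_const_mul, (hψZ i).integral_eq])
    _ = ∫ ω, ψ (X ω) ∂P := by rw [← Finset.sum_mul, hsum, one_mul]

end comb
/-- Every element of the closure in probability of the convex hull of `F`-distributed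
random variables is dominated in convex order by `F` (represented by a random variable `X`). -/
theorem stmt_0 {Ω : Type*} [MeasurableSpace Ω] (P : Measure Ω) [IsProbabilityMeasure P]
    (hatomless : ∀ s, MeasurableSet s → P s ≠ 0 → ∃ t ⊆ s, MeasurableSet t ∧ 0 < P t ∧ P t < P s)
    (X : Ω → ℝ) (hXint : Integrable X P)
    (m : ℝ) (hsupp : ∀ᵐ ω ∂P, m ≤ X ω)
    (Y : Ω → ℝ) (Yn : ℕ → Ω → ℝ)
    (hcomb : ∀ n, ∃ (k : ℕ) (lam : Fin k → ℝ) (Z : Fin k → Ω → ℝ),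
      0 < k ∧ (∀ i, 0 ≤ lam i) ∧ (∑ i, lam i) = 1 ∧
      (∀ i, IdentDistrib (Z i) X P P) ∧
      Yn n = fun ω => ∑ i, lam i * Z i ω)
    (hlim : TendstoInMeasure P Yn atTop Y)
    (φ : ℝ → ℝ) (hφc : Continuous φ) (hφconv : ConvexOn ℝ univ φ)
    (hintY : Integrable (fun ω => φ (Y ω)) P)
    (hintX : Integrable (fun ω => φ (X ω)) P)
    (hintYn : ∀ n, Integrable (fun ω => φ (Yn n ω)) P) :
    ∫ ω, φ (Y ω) ∂P ≤ ∫ ω, φ (X ω) ∂P := by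
  -- truncation functions
  set Ψ : ℝ → ℝ → ℝ := fun K x => max (x - K) 0 with hΨ
  have hΨc : ∀ K, Continuous (Ψ K) := fun K =>
    (continuous_id.sub continuous_const).max continuous_const
  have hΨconv : ∀ K, ConvexOn ℝ univ (Ψ K) := by
    intro K
    refine ⟨convex_univ, fun x _ y _ a b ha hb hab => ?_⟩
    simp only [smul_eq_mul, hΨ]
    refine max_le ?_ ?_
    · have h1 : x - K ≤ max (x - K) 0 := le_max_left _ _
      have h2 : y - K ≤ max (y - K) 0 := le_max_left _ _
      have h3 := mul_le_mul_of_nonneg_left h1 ha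
      have h4 := mul_le_mul_of_nonneg_left h2 hb
      have h5 : a * K + b * K = K := by rw [← add_mul, hab, one_mul]
      linarith
    · have h1 : (0:ℝ) ≤ max (x - K) 0 := le_max_right _ _
      have h2 : (0:ℝ) ≤ max (y - K) 0 := le_max_right _ _
      nlinarith [mul_le_mul_of_nonneg_left h1 ha, mul_le_mul_of_nonneg_left h2 hb]
  have hΨintX : ∀ K : ℝ, 0 ≤ K → Integrable (fun ω => Ψ K (X ω)) P := by
    intro K hK
    refine Integrable.mono' (hXint.abs.add (integrable_const K))
      (((hΨc K).measurable.comp_aemeasurable hXint.aemeasurable).aestronglyMeasurable)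
      (Eventually.of_forall fun ω => ?_)
    simp only [hΨ, Real.norm_eq_abs]
    rw [abs_of_nonneg (le_max_right _ _)]
    simp only [Pi.add_apply]
    refine max_le ?_ (by positivity)
    have := le_abs_self (X ω); linarith
  -- facts about `Yn`
  have hYn_int : ∀ n, Integrable (Yn n) P := by
    intro n
    obtain ⟨k, lam, Z, -, hlam, hsum, hZ, hYeq⟩ := hcomb n
    rw [hYeq]; exact (my_comb_mean hXint hsum hZ).1
  have hYn_mean : ∀ n, ∫ ω, Yn n ω ∂P = ∫ ω, X ω ∂P := by
    intro n
    obtain ⟨k, lam, Z, -, hlam, hsum, hZ, hYeq⟩ := hcomb n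
    rw [hYeq]; exact (my_comb_mean hXint hsum hZ).2
  have hYn_ge : ∀ n, ∀ᵐ ω ∂P, m ≤ Yn n ω := by
    intro n
    obtain ⟨k, lam, Z, -, hlam, hsum, hZ, hYeq⟩ := hcomb n
    rw [hYeq]
    have hZm : ∀ᵐ ω ∂P, ∀ i, m ≤ Z i ω :=
      ae_all_iff.2 fun i => my_ident_ae_le (hZ i) hsupp
    filter_upwards [hZm] with ω hω
    calc m = ∑ i, lam i * m := by rw [← Finset.sum_mul, hsum, one_mul]
      _ ≤ ∑ i, lam i * Z i ω :=
        Finset.sum_le_sum fun i _ => mul_le_mul_of_nonneg_left (hω i) (hlam i)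
  have hφYn_le : ∀ n, ∫ ω, φ (Yn n ω) ∂P ≤ ∫ ω, φ (X ω) ∂P := by
    intro n
    obtain ⟨k, lam, Z, -, hlam, hsum, hZ, hYeq⟩ := hcomb n
    rw [hYeq]; exact (my_comb_le hφc hφconv hXint hintX hlam hsum hZ).2
  have hΨYn : ∀ K : ℝ, 0 ≤ K → ∀ n, Integrable (fun ω => Ψ K (Yn n ω)) P ∧
      ∫ ω, Ψ K (Yn n ω) ∂P ≤ ∫ ω, Ψ K (X ω) ∂P := by
    intro K hK n
    obtain ⟨k, lam, Z, -, hlam, hsum, hZ, hYeq⟩ := hcomb n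
    rw [hYeq]; exact my_comb_le (hΨc K) (hΨconv K) hXint (hΨintX K hK) hlam hsum hZ
  -- a.e. convergent subsequence
  obtain ⟨ns, hns, hae⟩ := hlim.exists_seq_tendsto_ae
  -- `Y ≥ m` a.e., `Y` a.e. measurable
  have hYm : ∀ᵐ ω ∂P, m ≤ Y ω := by
    filter_upwards [hae, ae_all_iff.2 fun i => hYn_ge (ns i)] with ω h1 h2
    exact ge_of_tendsto h1 (Eventually.of_forall h2)
  have hYae : AEMeasurable Y P :=
    aemeasurable_of_tendsto_metrizable_ae atTop (fun i => (hYn_int (ns i)).aemeasurable) hae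
  -- integrability of `Y` and `∫ Y ≤ ∫ X`
  have hmX : m ≤ ∫ ω, X ω ∂P := by
    have := integral_mono_ae (integrable_const m) hXint hsupp
    simpa using this
  have hfat1 : ∫⁻ ω, ENNReal.ofReal (Y ω - m) ∂P ≤ ENNReal.ofReal (∫ ω, X ω ∂P - m) := by
    refine my_fatou_aux (W := fun i ω => Yn (ns i) ω - m)
      (fun i => ((hYn_int (ns i)).sub (integrable_const m)).aemeasurable)
      (fun i => by filter_upwards [hYn_ge (ns i)] with ω hω; simpa using hω)
      (fun i => (hYn_int (ns i)).sub (integrable_const m)) (fun i => ?_) ?_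
    · rw [integral_sub (hYn_int (ns i)) (integrable_const m), hYn_mean]
      simp
    · filter_upwards [hae] with ω hω
      exact hω.sub_const m
  obtain ⟨hYmint, hYmle⟩ := my_of_lintegral_bound (hYae.sub_const m)
    (by filter_upwards [hYm] with ω hω; simpa using hω) hfat1 (by linarith)
  have hYint : Integrable Y P := by
    have : Y = fun ω => (Y ω - m) + m := by funext ω; ring
    rw [this]; exact hYmint.add (integrable_const m)
  have hEYle : ∫ ω, Y ω ∂P ≤ ∫ ω, X ω ∂P := by
    rw [integral_sub hYint (integrable_const m)] at hYmle
    simp only [integral_const, measure_univ, probReal_univ, ENNReal.toReal_one, one_smul, smul_eq_mul] at hYmle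
    linarith
  -- `∫ X ≤ ∫ Y` via truncation
  have hEXle : ∫ ω, X ω ∂P ≤ ∫ ω, Y ω ∂P := by
    have key : ∀ K : ℕ, ∫ ω, X ω ∂P ≤ ∫ ω, Y ω ∂P + ∫ ω, Ψ (K:ℝ) (X ω) ∂P := by
      intro K
      have hK0 : (0:ℝ) ≤ (K:ℝ) := Nat.cast_nonneg K
      -- min decomposition
      have hmin : ∀ (g : Ω → ℝ) ω, min (g ω) K = g ω - Ψ (K:ℝ) (g ω) := by
        intro g ω
        simp only [hΨ]
        rcases le_total (g ω) K with h | h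
        · rw [min_eq_left h, max_eq_right (by linarith)]; ring
        · rw [min_eq_right h, max_eq_left (by linarith)]; ring
      have hminint : ∀ n, Integrable (fun ω => min (Yn n ω) K) P := by
        intro n
        have : (fun ω => min (Yn n ω) K) = fun ω => Yn n ω - Ψ (K:ℝ) (Yn n ω) := by
          funext ω; exact hmin _ ω
        rw [this]
        exact (hYn_int n).sub (hΨYn K hK0 n).1
      have hminY_int : Integrable (fun ω => min (Y ω) K) P := by
        have : (fun ω => min (Y ω) K) = fun ω => Y ω - Ψ (K:ℝ) (Y ω) := by
          funext ω; exact hmin _ ω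
        rw [this]
        refine hYint.sub ?_
        refine Integrable.mono' (hYint.abs.add (integrable_const (K:ℝ)))
          (((hΨc K).measurable.comp_aemeasurable hYint.aemeasurable).aestronglyMeasurable)
          (Eventually.of_forall fun ω => ?_)
        simp only [hΨ, Real.norm_eq_abs]
        rw [abs_of_nonneg (le_max_right _ _)]
        simp only [Pi.add_apply]
        refine max_le ?_ (by positivity)
        have := le_abs_self (Y ω); linarith
      have step1 : ∀ n, ∫ ω, X ω ∂P - ∫ ω, Ψ (K:ℝ) (X ω) ∂P ≤ ∫ ω, min (Yn n ω) K ∂P := by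
        intro n
        have : ∫ ω, min (Yn n ω) K ∂P = ∫ ω, Yn n ω ∂P - ∫ ω, Ψ (K:ℝ) (Yn n ω) ∂P := by
          rw [← integral_sub (hYn_int n) (hΨYn K hK0 n).1]
          exact integral_congr_ae (Eventually.of_forall fun ω => hmin _ ω)
        rw [this, hYn_mean n]
        have := (hΨYn K hK0 n).2
        linarith
      have step2 : Tendsto (fun i => ∫ ω, min (Yn (ns i) ω) K ∂P) atTop
          (𝓝 (∫ ω, min (Y ω) K ∂P)) := by
        refine tendsto_integral_of_dominated_convergence (fun _ => max |m| K)
          (fun i => (hminint (ns i)).aestronglyMeasurable) (integrable_const _)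
          (fun i => ?_) ?_
        · filter_upwards [hYn_ge (ns i)] with ω hω
          rw [Real.norm_eq_abs, abs_le]
          constructor
          · have h1 : min m (K:ℝ) ≤ min (Yn (ns i) ω) K := min_le_min hω le_rfl
            have h2 : -(max |m| (K:ℝ)) ≤ min m (K:ℝ) := by
              rcases le_total m (K:ℝ) with h | h
              · rw [min_eq_left h]
                have := neg_abs_le m
                have := le_max_left |m| (K:ℝ); linarith
              · rw [min_eq_right h]
                have := le_max_right |m| (K:ℝ); linarith
            linarith
          · have h1 : min (Yn (ns i) ω) K ≤ K := min_le_right _ _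
            have := le_max_right |m| (K:ℝ); linarith
        · filter_upwards [hae] with ω hω
          exact hω.min tendsto_const_nhds
      have step3 : ∫ ω, X ω ∂P - ∫ ω, Ψ (K:ℝ) (X ω) ∂P ≤ ∫ ω, min (Y ω) K ∂P :=
        ge_of_tendsto step2 (Eventually.of_forall fun i => step1 (ns i))
      have step4 : ∫ ω, min (Y ω) K ∂P ≤ ∫ ω, Y ω ∂P :=
        integral_mono hminY_int hYint fun ω => min_le_left _ _
      linarith
    have hlim0 : Tendsto (fun K : ℕ => ∫ ω, Ψ (K:ℝ) (X ω) ∂P) atTop (𝓝 0) := by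
      have h0 : (0:ℝ) = ∫ _ω, (0:ℝ) ∂P := by simp
      rw [h0]
      refine tendsto_integral_of_dominated_convergence (fun ω => |X ω|)
        (fun K => ((hΨc K).measurable.comp_aemeasurable hXint.aemeasurable).aestronglyMeasurable)
        hXint.abs (fun K => Eventually.of_forall fun ω => ?_) (Eventually.of_forall fun ω => ?_)
      · simp only [hΨ, Real.norm_eq_abs]
        rw [abs_of_nonneg (le_max_right _ _)]
        refine max_le ?_ (abs_nonneg _)
        have h1 := le_abs_self (X ω)
        have h2 : (0:ℝ) ≤ (K:ℝ) := Nat.cast_nonneg K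
        linarith
      · refine tendsto_atTop_of_eventually_const (i₀ := ⌈X ω⌉₊) fun K hK => ?_
        simp only [hΨ]
        rw [max_eq_right]
        have : X ω ≤ (⌈X ω⌉₊ : ℝ) := Nat.le_ceil _
        have h2 : ((⌈X ω⌉₊ : ℕ):ℝ) ≤ (K:ℝ) := Nat.cast_le.2 hK
        linarith
    have : Tendsto (fun K : ℕ => ∫ ω, Y ω ∂P + ∫ ω, Ψ (K:ℝ) (X ω) ∂P) atTop
        (𝓝 (∫ ω, Y ω ∂P + 0)) := tendsto_const_nhds.add hlim0
    have := ge_of_tendsto this (Eventually.of_forall key)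
    linarith
  have hEY : ∫ ω, Y ω ∂P = ∫ ω, X ω ∂P := le_antisymm hEYle hEXle
  -- final Fatou argument
  obtain ⟨a, ha⟩ := my_exists_affine_le hφconv
  set C : ℝ := ∫ ω, φ (X ω) ∂P - (φ 0 + a * ∫ ω, X ω ∂P) with hC
  have haffX : Integrable (fun ω => φ 0 + a * X ω) P :=
    (integrable_const (φ 0)).add (hXint.const_mul a)
  have hCnn : 0 ≤ C := by
    have h1 : ∫ ω, (φ (X ω) - (φ 0 + a * X ω)) ∂P =
        ∫ ω, φ (X ω) ∂P - (φ 0 + a * ∫ ω, X ω ∂P) := by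
      rw [integral_sub hintX haffX, integral_add (integrable_const (φ 0)) (hXint.const_mul a),
        integral_const_mul]
      simp
    have h2 : 0 ≤ ∫ ω, (φ (X ω) - (φ 0 + a * X ω)) ∂P :=
      integral_nonneg fun ω => by have := ha (X ω); simp; linarith
    rw [h1] at h2; linarith
  have hintaff : ∀ n, Integrable (fun ω => φ 0 + a * Yn n ω) P :=
    fun n => (integrable_const (φ 0)).add ((hYn_int n).const_mul a)
  have hfat2 : ∫⁻ ω, ENNReal.ofReal (φ (Y ω) - (φ 0 + a * Y ω)) ∂P ≤ ENNReal.ofReal C := by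
    refine my_fatou_aux (W := fun i ω => φ (Yn (ns i) ω) - (φ 0 + a * Yn (ns i) ω))
      (fun i => ((hintYn (ns i)).sub (hintaff (ns i))).aemeasurable)
      (fun i => Eventually.of_forall fun ω => by have := ha (Yn (ns i) ω); simp; linarith)
      (fun i => (hintYn (ns i)).sub (hintaff (ns i))) (fun i => ?_) ?_
    · rw [integral_sub (hintYn (ns i)) (hintaff (ns i)),
        integral_add (integrable_const (φ 0)) ((hYn_int (ns i)).const_mul a),
        integral_const_mul, hYn_mean]
      have := hφYn_le (ns i)
      simp only [integral_const, measure_univ, probReal_univ, ENNReal.toReal_one, one_smul, smul_eq_mul, hC]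
      linarith
    · filter_upwards [hae] with ω hω
      have h1 : Tendsto (fun i => φ (Yn (ns i) ω)) atTop (𝓝 (φ (Y ω))) :=
        (hφc.tendsto _).comp hω
      have h2 : Tendsto (fun i => φ 0 + a * Yn (ns i) ω) atTop (𝓝 (φ 0 + a * Y ω)) :=
        tendsto_const_nhds.add (hω.const_mul a)
      exact h1.sub h2
  obtain ⟨-, hfin⟩ := my_of_lintegral_bound
    (V := fun ω => φ (Y ω) - (φ 0 + a * Y ω))
    (((hφc.measurable.comp_aemeasurable hYae)).sub
      ((aemeasurable_const).add (hYae.const_mul a)))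
    (Eventually.of_forall fun ω => by have := ha (Y ω); simp; linarith)
    hfat2 hCnn
  have haffY : Integrable (fun ω => φ 0 + a * Y ω) P :=
    (integrable_const (φ 0)).add (hYint.const_mul a)
  rw [integral_sub hintY haffY,
    integral_add (integrable_const (φ 0)) (hYint.const_mul a), integral_const_mul, hEY] at hfin
  simp only [integral_const, measure_univ, probReal_univ, ENNReal.toReal_one, one_smul, smul_eq_mul, hC] at hfin
  linarith
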